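/- Let G₁ : S ⥤ V₁ and G₂ : V₁ ⥤ V₂ be functors each admitting an asymmetric lens structure: there exist categories Λ₁, Λ₂, discrete opfibrations F₁ : Λ₁ ⥤ V₁, F₂ : Λ₂ ⥤ V₂ and bijective-on-objects functors P₁ : Λ₁ ⥤ S, P₂ : Λ₂ ⥤ V₁ with P₁ ⋙ G₁ = F₁ and P₂ ⋙ G₂ = F₂. Then the composite functor G₁ ⋙ G₂ : S ⥤ V₂ admits an asymmetric lens structure: there exist a category Λ, a discrete opfibration F : Λ ⥤ V₂ and a bijective-on-objects functor P : Λ ⥤ S with P ⋙ (G₁ ⋙ G₂) = F. -/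

import Mathlib

open CategoryTheory

/-- A functor `F : C ⥤ D` is a discrete opfibration if for every object `c` of `C` and
every morphism `g : F.obj c ⟶ d` in `D`, there is a unique pair of an object `c'` and a
morphism `f : c ⟶ c'` with `F.obj c' = d` and `F.map f ≫ eqToHom _ = g`. -/
def IsDiscreteOpfib {C : Type*} [Category C] {D : Type*} [Category D] (F : C ⥤ D) : Prop :=
  ∀ (c : C) ⦃d : D⦄ (g : F.obj c ⟶ d),
    ∃! p : (c' : C) × (c ⟶ c'), ∃ h : F.obj p.1 = d, F.map p.2 ≫ eqToHom h = g

/-- An asymmetric lens structure on a functor `G : S ⥤ V` (in `Cat`): a category `Λ`,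
a discrete opfibration `F : Λ ⥤ V` and a bijective-on-objects functor `P : Λ ⥤ S`
(the Put) such that `P ⋙ G = F`. -/
def HasLensStructure {S V : Cat} (G : S ⟶ V) : Prop :=
  ∃ (Λ : Cat) (F : Λ ⟶ V) (P : Λ ⟶ S),
    IsDiscreteOpfib F.toFunctor ∧ Function.Bijective P.toFunctor.obj ∧ P ≫ G = F

section PBConstr

universe v u

variable {Λ₁ Λ₂ V₁ : Type u} [Category.{v} Λ₁] [Category.{v} Λ₂] [Category.{v} V₁]

/-- The strict pullback of `P₂` along `F₁`, presented with the same objects as `Λ₁`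
(using a chosen inverse `e` of `P₂`'s object map). -/
def PB (F₁ : Λ₁ ⥤ V₁) (P₂ : Λ₂ ⥤ V₁) (e : V₁ → Λ₂)
    (_he : ∀ v, P₂.obj (e v) = v) : Type u := Λ₁

variable (F₁ : Λ₁ ⥤ V₁) (P₂ : Λ₂ ⥤ V₁) (e : V₁ → Λ₂) (he : ∀ v, P₂.obj (e v) = v)

instance : Category.{v} (PB F₁ P₂ e he) where
  Hom a b := {p : ((show Λ₁ from a) ⟶ (show Λ₁ from b)) × (e (F₁.obj a) ⟶ e (F₁.obj b)) //
      P₂.map p.2 = eqToHom (he _) ≫ F₁.map p.1 ≫ eqToHom (he _).symm}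
  id a := ⟨(𝟙 _, 𝟙 _), by erw [F₁.map_id]; simp⟩
  comp p q := ⟨(p.1.1 ≫ q.1.1, p.1.2 ≫ q.1.2), by
    simp [p.2, q.2]; erw [F₁.map_comp]; simp⟩
  id_comp p := by apply Subtype.ext; apply Prod.ext; exact Category.id_comp _; simp
  comp_id p := by apply Subtype.ext; apply Prod.ext; exact Category.comp_id _; simp
  assoc p q r := by apply Subtype.ext; apply Prod.ext; exact Category.assoc _ _ _; simp

/-- First projection of the pullback. -/
def PB.p : PB F₁ P₂ e he ⥤ Λ₁ where
  obj a := a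
  map p := p.1.1
  map_id _ := rfl
  map_comp _ _ := rfl

/-- Second projection of the pullback. -/
def PB.q : PB F₁ P₂ e he ⥤ Λ₂ where
  obj a := e (F₁.obj a)
  map p := p.1.2
  map_id _ := rfl
  map_comp _ _ := rfl

theorem PB.comm : PB.p F₁ P₂ e he ⋙ F₁ = PB.q F₁ P₂ e he ⋙ P₂ := by
  refine CategoryTheory.Functor.ext (fun a => (he _).symm) (fun a b p => ?_)
  show F₁.map p.1.1 = eqToHom _ ≫ P₂.map p.1.2 ≫ eqToHom _
  rw [p.2]; simp only [Category.assoc]; erw [eqToHom_trans_assoc, eqToHom_refl, Category.id_comp, eqToHom_trans, eqToHom_refl, Category.comp_id]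

theorem PB.opfib {V₂ : Type u} [Category.{v} V₂] (F₂ : Λ₂ ⥤ V₂)
    (hF₁ : IsDiscreteOpfib F₁) (hF₂ : IsDiscreteOpfib F₂)
    (hinj : Function.Injective P₂.obj) :
    IsDiscreteOpfib (PB.q F₁ P₂ e he ⋙ F₂) := by
  intro a d g
  obtain ⟨⟨b, k⟩, ⟨hb, hk⟩, huniq₂⟩ := hF₂ (e (F₁.obj a)) g
  obtain ⟨⟨a', f⟩, ⟨ha', hf⟩, huniq₁⟩ := hF₁ a (eqToHom (he (F₁.obj a)).symm ≫ P₂.map k)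
  have hb' : e (F₁.obj a') = b := hinj (by rw [he, ha'])
  have hf' : F₁.map f = (eqToHom (he (F₁.obj a)).symm ≫ P₂.map k) ≫ eqToHom ha'.symm := by
    rw [← hf]; simp
  refine ⟨⟨a', ⟨(f, k ≫ eqToHom hb'.symm), ?_⟩⟩, ⟨?_, ?_⟩, ?_⟩
  · simp [hf', eqToHom_map]
  · show F₂.obj (e (F₁.obj a')) = d
    rw [hb']; exact hb
  · show F₂.map (k ≫ eqToHom hb'.symm) ≫ eqToHom _ = g
    rw [← hk]; simp [eqToHom_map]; erw [eqToHom_trans]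
  · rintro ⟨a'', ⟨⟨f₂, k₂⟩, comm₂⟩⟩ ⟨hd, hmap⟩
    have h2 := huniq₂ ⟨e (F₁.obj a''), k₂⟩ ⟨hd, hmap⟩
    obtain ⟨hbe, hke⟩ := Sigma.mk.inj_iff.mp h2
    subst hbe
    have hk2 : k₂ = k := eq_of_heq hke
    subst hk2
    have h1 := huniq₁ ⟨a'', f₂⟩ ⟨(he _).symm, by rw [comm₂]; simp⟩
    obtain ⟨hae, hfe⟩ := Sigma.mk.inj_iff.mp h1
    subst hae
    have hf2 : f₂ = f := eq_of_heq hfe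
    subst hf2
    refine congrArg (Sigma.mk a'') ?_
    apply Subtype.ext
    apply Prod.ext
    · rfl
    · simp

end PBConstr

/-- Asymmetric lenses compose: the Gets compose, and the composite Get again carries a
lens structure (obtained by pulling back the second Put along the first lens's discrete
opfibration). -/
theorem lens_comp {S V₁ V₂ : Cat} (G₁ : S ⟶ V₁) (G₂ : V₁ ⟶ V₂)
    (h₁ : HasLensStructure G₁) (h₂ : HasLensStructure G₂) :
    HasLensStructure (G₁ ≫ G₂) := by
  obtain ⟨Λ₁, F₁, P₁, hF₁, hP₁, hc₁⟩ := h₁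
  obtain ⟨Λ₂, F₂, P₂, hF₂, hP₂, hc₂⟩ := h₂
  have hc₁' : P₁.toFunctor ⋙ G₁.toFunctor = F₁.toFunctor := congrArg Cat.Hom.toFunctor hc₁
  have hc₂' : P₂.toFunctor ⋙ G₂.toFunctor = F₂.toFunctor := congrArg Cat.Hom.toFunctor hc₂
  set e : ↑V₁ → ↑Λ₂ := Function.surjInv hP₂.2 with hedef
  have he : ∀ v, P₂.toFunctor.obj (e v) = v := fun v => Function.surjInv_eq hP₂.2 v
  refine ⟨Cat.of (PB F₁.toFunctor P₂.toFunctor e he), (PB.q F₁.toFunctor P₂.toFunctor e he ⋙ F₂.toFunctor).toCatHom, (PB.p F₁.toFunctor P₂.toFunctor e he ⋙ P₁.toFunctor).toCatHom,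
    PB.opfib F₁.toFunctor P₂.toFunctor e he F₂.toFunctor hF₁ hF₂ hP₂.1, hP₁, ?_⟩
  apply Cat.Hom.ext
  show (PB.p F₁.toFunctor P₂.toFunctor e he ⋙ P₁.toFunctor) ⋙ (G₁.toFunctor ⋙ G₂.toFunctor) = PB.q F₁.toFunctor P₂.toFunctor e he ⋙ F₂.toFunctor
  calc (PB.p F₁.toFunctor P₂.toFunctor e he ⋙ P₁.toFunctor) ⋙ (G₁.toFunctor ⋙ G₂.toFunctor)
      = PB.p F₁.toFunctor P₂.toFunctor e he ⋙ ((P₁.toFunctor ⋙ G₁.toFunctor) ⋙ G₂.toFunctor) := rfl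
    _ = PB.p F₁.toFunctor P₂.toFunctor e he ⋙ (F₁.toFunctor ⋙ G₂.toFunctor) := by rw [hc₁']
    _ = (PB.p F₁.toFunctor P₂.toFunctor e he ⋙ F₁.toFunctor) ⋙ G₂.toFunctor := rfl
    _ = (PB.q F₁.toFunctor P₂.toFunctor e he ⋙ P₂.toFunctor) ⋙ G₂.toFunctor := by rw [PB.comm]
    _ = PB.q F₁.toFunctor P₂.toFunctor e he ⋙ (P₂.toFunctor ⋙ G₂.toFunctor) := rfl
    _ = PB.q F₁.toFunctor P₂.toFunctor e he ⋙ F₂.toFunctor := by rw [hc₂']
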